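/- Let N ≥ d_t = dim(P_t(S^d)) and let X_N ⊂ S^d be a fundamental system for P_t(S^d). Define D_{N,t}(X_N) = (ω_d²/N²) C_t(X_N)^T C_t(X_N). Then 0 ≤ D_{N,t}(X_N) ≤ 4(N−1)M(d+1,t)², and X_N is a spherical t-design if and only if D_{N,t}(X_N) = 0. -/

import Mathlib

open MeasureTheory Finset Matrix

noncomputable section

/-- Euclidean space `ℝ^{d+1}`. -/
abbrev Esp (d : ℕ) := EuclideanSpace ℝ (Fin (d + 1))

/-- The unit sphere `S^d ⊂ ℝ^{d+1}`. -/
abbrev Sd (d : ℕ) := Metric.sphere (0 : Esp d) 1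

/-- The surface measure on `S^d`. -/
def sphMeasure (d : ℕ) : Measure (Sd d) := (volume : Measure (Esp d)).toSphere

/-- The surface area `ω_d` of `S^d`. -/
def omega (d : ℕ) : ℝ := (sphMeasure d Set.univ).toReal

/-- `f : S^d → ℝ` is the restriction of a polynomial of degree at most `t`. -/
def IsPt (d t : ℕ) (f : Sd d → ℝ) : Prop :=
  ∃ P : MvPolynomial (Fin (d + 1)) ℝ, P.totalDegree ≤ t ∧
    ∀ x : Sd d, f x = MvPolynomial.eval (fun i => (x : Esp d) i) P

/-- `X` is a spherical `t`-design. -/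
def IsDesign (d t N : ℕ) (X : Fin N → Sd d) : Prop :=
  ∀ f : Sd d → ℝ, IsPt d t f →
    (∑ j, f (X j)) / (N : ℝ) = (∫ x, f x ∂(sphMeasure d)) / omega d

/-- `M(d,ℓ)`, the dimension of the space of degree-`ℓ` spherical harmonics on `S^d`. -/
def Mdim (d ℓ : ℕ) : ℕ := (2 * ℓ + d - 1) * Nat.factorial (ℓ + d - 2) /
    (Nat.factorial (d - 1) * Nat.factorial ℓ)

/-- `X` is a fundamental system for `P_t(S^d)`. -/
def IsFundamental (d t N : ℕ) (X : Fin N → Sd d) : Prop :=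
  ∀ f : Sd d → ℝ, IsPt d t f → (∀ j, f (X j) = 0) → ∀ x, f x = 0

/-- The hypotheses that `Y ℓ k`, `k < M(d,ℓ)`, `ℓ ≤ t`, form an orthonormal basis of real
spherical harmonics for `P_t(S^d)`, with `Y 0 0` the constant `1/√ω_d`. -/
structure IsONBHarmonics (d t : ℕ) (Y : ℕ → ℕ → Sd d → ℝ) : Prop where
  poly : ∀ ℓ ≤ t, ∀ k < Mdim d ℓ, IsPt d ℓ (Y ℓ k)
  ortho : ∀ ℓ ≤ t, ∀ ℓ' ≤ t, ∀ k < Mdim d ℓ, ∀ k' < Mdim d ℓ',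
    ∫ x, Y ℓ k x * Y ℓ' k' x ∂(sphMeasure d) = if ℓ = ℓ' ∧ k = k' then 1 else 0
  span : ∀ f : Sd d → ℝ, IsPt d t f → ∃ c : ℕ → ℕ → ℝ,
    ∀ x, f x = ∑ ℓ ∈ range (t + 1), ∑ k ∈ range (Mdim d ℓ), c ℓ k * Y ℓ k x
  const : ∀ x, Y 0 0 x = 1 / Real.sqrt (omega d)

/-- Row index set for the matrix `Y_t`: pairs `(ℓ, k)` with `ℓ ≤ t`, `k < M(d,ℓ)`. -/
abbrev HIdx (d t : ℕ) := (ℓ : Fin (t + 1)) × Fin (Mdim d ℓ.1)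

/-- The spherical harmonic evaluation matrix `Y_t ∈ ℝ^{d_t × N}`. -/
def Ymat (d t N : ℕ) (Y : ℕ → ℕ → Sd d → ℝ) (X : Fin N → Sd d) :
    Matrix (HIdx d t) (Fin N) ℝ :=
  fun p j => Y p.1.1 p.2.1 (X j)

/-- The Gram matrix `G_t = Y_tᵀ Y_t`. -/
def Gmat (d t N : ℕ) (Y : ℕ → ℕ → Sd d → ℝ) (X : Fin N → Sd d) :
    Matrix (Fin N) (Fin N) ℝ :=
  (Ymat d t N Y X)ᵀ * Ymat d t N Y X

/-- The vector `C_t(X_N) ∈ ℝ^{N-1}`, `(C_t)_i = (G_t e)_1 - (G_t e)_{i+1}`. -/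
def Cvec (d t N : ℕ) (Y : ℕ → ℕ → Sd d → ℝ) (X : Fin N → Sd d) :
    Fin (N - 1) → ℝ :=
  fun i =>
    (Gmat d t N Y X).mulVec (fun _ => 1) ⟨0, by have := i.2; omega⟩ -
      (Gmat d t N Y X).mulVec (fun _ => 1) ⟨i.1 + 1, by have := i.2; omega⟩

/-- The nonnegative quantity `D_{N,t}(X_N) = (ω_d²/N²) C_t(X)ᵀ C_t(X)`. -/
def DNt (d t N : ℕ) (Y : ℕ → ℕ → Sd d → ℝ) (X : Fin N → Sd d) : ℝ :=
  (omega d) ^ 2 / (N : ℝ) ^ 2 * ∑ i, (Cvec d t N Y X i) ^ 2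

open scoped Pointwise

instance sphFinite (d : ℕ) : IsFiniteMeasure (sphMeasure d) := by
  unfold sphMeasure; infer_instance

lemma IsPt.continuous {d t : ℕ} {f : Sd d → ℝ} (h : IsPt d t f) : Continuous f := by
  obtain ⟨P, -, hP⟩ := h
  have : f = fun x : Sd d => MvPolynomial.eval (fun i => (x : Esp d) i) P := funext hP
  rw [this]
  apply (MvPolynomial.continuous_eval _).comp
  exact continuous_pi fun i => (continuous_apply i).comp ((PiLp.continuous_ofLp ..).comp continuous_subtype_val)

lemma Continuous.sphIntegrable {d : ℕ} {f : Sd d → ℝ} (hf : Continuous f) :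
    Integrable f (sphMeasure d) :=
  hf.integrable_of_hasCompactSupport
    ((isCompact_univ).of_isClosed_subset (isClosed_tsupport f) (Set.subset_univ _))

lemma omega_pos (d : ℕ) : 0 < omega d := by
  rw [omega]
  apply ENNReal.toReal_pos _ (measure_ne_top _ _)
  rw [sphMeasure, Measure.toSphere_apply_univ]
  refine mul_ne_zero ?_ ?_
  · simp [finrank_euclideanSpace]
  · exact (Metric.measure_ball_pos _ _ one_pos).ne'

lemma omega_ne (d : ℕ) : omega d ≠ 0 := (omega_pos d).ne'

lemma isPt_mono {d t t' : ℕ} {f : Sd d → ℝ} (h : IsPt d t f) (ht : t ≤ t') : IsPt d t' f := by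
  obtain ⟨P, hd, hP⟩ := h; exact ⟨P, hd.trans ht, hP⟩

lemma isPt_const {d t : ℕ} (c : ℝ) : IsPt d t (fun _ => c) :=
  ⟨MvPolynomial.C c, by simp, by simp⟩

lemma isPt_add {d t : ℕ} {f g : Sd d → ℝ} (hf : IsPt d t f) (hg : IsPt d t g) :
    IsPt d t (fun x => f x + g x) := by
  obtain ⟨P, hP1, hP2⟩ := hf; obtain ⟨Q, hQ1, hQ2⟩ := hg
  exact ⟨P + Q, (MvPolynomial.totalDegree_add _ _).trans (max_le hP1 hQ1),
    fun x => by simp [hP2 x, hQ2 x]⟩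

lemma isPt_smul {d t : ℕ} {f : Sd d → ℝ} (c : ℝ) (hf : IsPt d t f) :
    IsPt d t (fun x => c * f x) := by
  obtain ⟨P, hP1, hP2⟩ := hf
  exact ⟨MvPolynomial.C c * P, by
    refine (MvPolynomial.totalDegree_mul _ _).trans ?_
    simpa using hP1, fun x => by simp [hP2 x]⟩

lemma isPt_sum {d t : ℕ} {ι : Type*} (s : Finset ι) (F : ι → Sd d → ℝ)
    (h : ∀ i ∈ s, IsPt d t (F i)) : IsPt d t (fun x => ∑ i ∈ s, F i x) := by
  classical
  induction s using Finset.induction_on with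
  | empty => simpa using isPt_const 0
  | insert a s hni ih =>
    simp only [Finset.sum_insert hni]
    exact isPt_add (h a (Finset.mem_insert_self a s))
      (ih fun i hi => h i (Finset.mem_insert_of_mem hi))

/-- The map on the sphere induced by a linear isometry. -/
def sphereMap {d : ℕ} (ρ : Esp d ≃ₗᵢ[ℝ] Esp d) (x : Sd d) : Sd d :=
  ⟨ρ x, by
    have hx : ‖(x : Esp d)‖ = 1 := by
      have := x.2
      rwa [mem_sphere_zero_iff_norm] at this
    rw [mem_sphere_zero_iff_norm, ρ.norm_map, hx]⟩

lemma continuous_sphereMap {d : ℕ} (ρ : Esp d ≃ₗᵢ[ℝ] Esp d) : Continuous (sphereMap ρ) :=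
  Continuous.subtype_mk (ρ.continuous.comp continuous_subtype_val) _

lemma exists_sphereMap_eq {d : ℕ} (x y : Sd d) :
    ∃ ρ : Esp d ≃ₗᵢ[ℝ] Esp d, sphereMap ρ x = y := by
  refine ⟨Submodule.reflection (ℝ ∙ ((x : Esp d) - (y : Esp d)))ᗮ, ?_⟩
  apply Subtype.ext
  show Submodule.reflection (ℝ ∙ ((x : Esp d) - (y : Esp d)))ᗮ (x : Esp d) = (y : Esp d)
  apply Submodule.reflection_sub
  have hx := x.2; have hy := y.2
  rw [mem_sphere_zero_iff_norm] at hx hy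
  rw [hx, hy]

lemma volume_preimage {d : ℕ} (ρ : Esp d ≃ₗᵢ[ℝ] Esp d) (B : Set (Esp d)) :
    (volume : Measure (Esp d)) (⇑ρ ⁻¹' B) = volume B := by
  have e : Esp d ≃ᵐ Esp d := ρ.toHomeomorph.toMeasurableEquiv
  have h1 : Measure.map (⇑ρ) (volume : Measure (Esp d)) = volume :=
    (ρ.measurePreserving).map_eq
  have h2 := MeasurableEquiv.map_apply (ρ.toHomeomorph.toMeasurableEquiv) (μ := (volume : Measure (Esp d))) B
  have h3 : (⇑(ρ.toHomeomorph.toMeasurableEquiv) : Esp d → Esp d) = ⇑ρ := rfl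
  rw [h3] at h2
  rw [← h2, h1]

lemma map_sphereMap_eq {d : ℕ} (ρ : Esp d ≃ₗᵢ[ℝ] Esp d) :
    Measure.map (sphereMap ρ) (sphMeasure d) = sphMeasure d := by
  refine Measure.ext fun s hs => ?_
  rw [Measure.map_apply (continuous_sphereMap ρ).measurable hs]
  rw [sphMeasure, Measure.toSphere_apply' _ ((continuous_sphereMap ρ).measurable hs),
    Measure.toSphere_apply' _ hs]
  have h1 : (Subtype.val '' (sphereMap ρ ⁻¹' s) : Set (Esp d)) = ⇑ρ ⁻¹' (Subtype.val '' s) := by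
    ext y
    constructor
    · rintro ⟨x, hx, rfl⟩
      exact ⟨sphereMap ρ x, hx, rfl⟩
    · rintro ⟨z, hz, hzy⟩
      have hy : y ∈ Metric.sphere (0 : Esp d) 1 := by
        rw [mem_sphere_zero_iff_norm, ← ρ.norm_map y, ← hzy]
        have := z.2; rwa [mem_sphere_zero_iff_norm] at this
      refine ⟨⟨y, hy⟩, ?_, rfl⟩
      show sphereMap ρ ⟨y, hy⟩ ∈ s
      have : sphereMap ρ ⟨y, hy⟩ = z := Subtype.ext hzy.symm
      rwa [this]
  rw [h1]
  have h2 : (Set.Ioo (0:ℝ) 1) • (⇑ρ ⁻¹' (Subtype.val '' s)) =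
      ⇑ρ ⁻¹' ((Set.Ioo (0:ℝ) 1) • (Subtype.val '' s)) := by
    ext y
    simp only [Set.mem_smul, Set.mem_preimage]
    constructor
    · rintro ⟨c, hc, z, hz, rfl⟩
      exact ⟨c, hc, ρ z, hz, (ρ.map_smul c z).symm⟩
    · rintro ⟨c, hc, z, hz, hcz⟩
      refine ⟨c, hc, ρ.symm z, by simpa using hz, ?_⟩
      apply ρ.injective
      rw [ρ.map_smul]
      simpa using hcz
  rw [h2, volume_preimage]

lemma integral_sphereMap {d : ℕ} (ρ : Esp d ≃ₗᵢ[ℝ] Esp d) (f : Sd d → ℝ) (hf : Continuous f) :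
    ∫ x, f (sphereMap ρ x) ∂(sphMeasure d) = ∫ x, f x ∂(sphMeasure d) := by
  conv_rhs => rw [← map_sphereMap_eq ρ]
  rw [integral_map (continuous_sphereMap ρ).measurable.aemeasurable]
  exact hf.aestronglyMeasurable

lemma coord_linear {d : ℕ} (ρ : Esp d ≃ₗᵢ[ℝ] Esp d) (x : Esp d) (i : Fin (d + 1)) :
    (ρ x) i = ∑ j, x j * (ρ (EuclideanSpace.single j (1:ℝ))) i := by
  have hx : ∑ j, (x j) • EuclideanSpace.single j (1:ℝ) = x := by
    simpa [EuclideanSpace.basisFun_apply, EuclideanSpace.basisFun_repr] using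
      (EuclideanSpace.basisFun (Fin (d + 1)) ℝ).sum_repr x
  conv_lhs => rw [← hx]
  rw [map_sum]
  have : ∀ j : Fin (d + 1), ρ ((x j) • EuclideanSpace.single j (1:ℝ))
      = (x j) • ρ (EuclideanSpace.single j (1:ℝ)) := fun j => ρ.map_smul _ _
  simp_rw [this]
  rw [WithLp.ofLp_sum, Finset.sum_apply]
  simp [PiLp.smul_apply, smul_eq_mul]

lemma totalDegree_bind₁_le {n : ℕ} (g : Fin n → MvPolynomial (Fin n) ℝ)
    (hg : ∀ i, (g i).totalDegree ≤ 1) (P : MvPolynomial (Fin n) ℝ) :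
    (MvPolynomial.bind₁ g P).totalDegree ≤ P.totalDegree := by
  conv_lhs => rw [P.as_sum]
  rw [map_sum]
  refine (MvPolynomial.totalDegree_finset_sum _ _).trans (Finset.sup_le fun s hs => ?_)
  rw [MvPolynomial.bind₁_monomial]
  refine (MvPolynomial.totalDegree_mul _ _).trans ?_
  rw [MvPolynomial.totalDegree_C, zero_add]
  refine le_trans (MvPolynomial.totalDegree_finset_prod _ _) ?_
  refine le_trans (Finset.sum_le_sum fun i _ => (MvPolynomial.totalDegree_pow _ _).trans
    (Nat.mul_le_mul_left _ (hg i))) ?_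
  simp only [mul_one]
  simpa [Finsupp.sum] using MvPolynomial.le_totalDegree hs

lemma isPt_comp_sphereMap {d t : ℕ} {f : Sd d → ℝ} (h : IsPt d t f)
    (ρ : Esp d ≃ₗᵢ[ℝ] Esp d) : IsPt d t (fun x => f (sphereMap ρ x)) := by
  obtain ⟨P, hP1, hP2⟩ := h
  refine ⟨MvPolynomial.bind₁
    (fun i => ∑ j, MvPolynomial.C ((ρ (EuclideanSpace.single j (1:ℝ))) i) * MvPolynomial.X j)
    P, ?_, ?_⟩
  · refine le_trans (totalDegree_bind₁_le _ ?_ P) hP1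
    intro i
    refine (MvPolynomial.totalDegree_finset_sum _ _).trans (Finset.sup_le fun j _ => ?_)
    refine (MvPolynomial.totalDegree_mul _ _).trans ?_
    simp [MvPolynomial.totalDegree_X]
  · intro x
    show f (sphereMap ρ x) = _
    rw [hP2 (sphereMap ρ x)]
    have key : (fun i : Fin (d+1) => ((sphereMap ρ x : Esp d) i)) =
        (fun i => MvPolynomial.eval (fun j => ((x : Esp d) j))
          (∑ j, MvPolynomial.C ((ρ (EuclideanSpace.single j (1:ℝ))) i) * MvPolynomial.X j)) := by
      funext i
      show ((ρ (x : Esp d)) i) = _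
      rw [coord_linear]
      simp [mul_comm]
    rw [key]
    exact (MvPolynomial.eval₂Hom_bind₁ (RingHom.id ℝ) _ _ P).symm

instance sphereNonempty (d : ℕ) : Nonempty (Sd d) := by
  refine ⟨⟨EuclideanSpace.single 0 (1:ℝ), ?_⟩⟩
  rw [mem_sphere_zero_iff_norm, EuclideanSpace.norm_single]
  norm_num

section Family

variable {d t : ℕ} (Z : HIdx d t → Sd d → ℝ)

/-- Integral of a product of two expansions. -/
lemma int_expansion_mul (hpt : ∀ p, IsPt d t (Z p))
    (horth : ∀ p q, ∫ x, Z p x * Z q x ∂(sphMeasure d) = if p = q then 1 else 0)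
    (c b : HIdx d t → ℝ) :
    ∫ x, (∑ p, c p * Z p x) * (∑ q, b q * Z q x) ∂(sphMeasure d) = ∑ p, c p * b p := by
  have hZc : ∀ p, Continuous (Z p) := fun p => (hpt p).continuous
  have h1 : ∀ x : Sd d, (∑ p, c p * Z p x) * (∑ q, b q * Z q x)
      = ∑ p, ∑ q, (c p * b q) * (Z p x * Z q x) := by
    intro x
    rw [Finset.sum_mul_sum]
    refine Finset.sum_congr rfl fun p _ => Finset.sum_congr rfl fun q _ => by ring
  simp_rw [h1]
  rw [integral_finset_sum]
  · have h2 : ∀ p, ∫ x, ∑ q, (c p * b q) * (Z p x * Z q x) ∂(sphMeasure d)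
        = ∑ q, (c p * b q) * (if p = q then (1:ℝ) else 0) := by
      intro p
      rw [integral_finset_sum]
      · exact Finset.sum_congr rfl fun q _ => by
          rw [MeasureTheory.integral_const_mul, horth p q]
      · intro q _
        exact (continuous_const.mul ((hZc p).mul (hZc q))).sphIntegrable
    simp_rw [h2]
    refine Finset.sum_congr rfl fun p _ => ?_
    rw [Finset.sum_eq_single p]
    · simp
    · intro q _ hq
      simp [Ne.symm hq]
    · simp
  · intro p _
    apply integrable_finset_sum
    intro q _
    exact (continuous_const.mul ((hZc p).mul (hZc q))).sphIntegrable

lemma int_expansion_coeff (hpt : ∀ p, IsPt d t (Z p))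
    (horth : ∀ p q, ∫ x, Z p x * Z q x ∂(sphMeasure d) = if p = q then 1 else 0)
    (c : HIdx d t → ℝ) (q : HIdx d t) :
    ∫ x, (∑ p, c p * Z p x) * Z q x ∂(sphMeasure d) = c q := by
  have h := int_expansion_mul Z hpt horth c (fun p => if p = q then 1 else 0)
  have h2 : ∀ x : Sd d, (∑ p, (if p = q then (1:ℝ) else 0) * Z p x) = Z q x := by
    intro x
    rw [Finset.sum_eq_single q]
    · simp
    · intro b _ hb; simp [hb]
    · simp
  simp_rw [h2] at h
  rw [h, Finset.sum_eq_single q]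
  · simp
  · intro b _ hb; simp [hb]
  · simp

lemma kernel_eq (hpt : ∀ p, IsPt d t (Z p))
    (horth : ∀ p q, ∫ x, Z p x * Z q x ∂(sphMeasure d) = if p = q then 1 else 0)
    (hspan : ∀ f : Sd d → ℝ, IsPt d t f → ∃ c : HIdx d t → ℝ, ∀ x, f x = ∑ p, c p * Z p x)
    (x₀ : Sd d) :
    ∑ p, (Z p x₀)^2 = (Fintype.card (HIdx d t) : ℝ) / omega d := by
  set K : Sd d → ℝ := fun x => ∑ p, (Z p x)^2 with hK
  have hKnn : ∀ x, 0 ≤ K x := fun x => Finset.sum_nonneg fun p _ => sq_nonneg _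
  have hbound : ∀ (f : Sd d → ℝ), IsPt d t f → ∀ y : Sd d,
      (f y)^2 ≤ (∫ z, (f z)^2 ∂(sphMeasure d)) * K y := by
    intro f hf y
    obtain ⟨c, hc⟩ := hspan f hf
    have hn : ∫ z, (f z)^2 ∂(sphMeasure d) = ∑ p, (c p)^2 := by
      have h3 := int_expansion_mul Z hpt horth c c
      simp_rw [← hc, ← sq] at h3
      rw [h3]
    rw [hn, hc y]
    exact Finset.sum_mul_sq_le_sq_mul_sq _ _ _
  have hmono : ∀ x y : Sd d, K x ≤ K y := by
    intro x y
    obtain ⟨ρ, hρ⟩ := exists_sphereMap_eq y x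
    set f : Sd d → ℝ := fun z => ∑ p, Z p x * Z p z with hf
    have hfp : IsPt d t f := isPt_sum _ _ fun p _ => isPt_smul _ (hpt p)
    have hfc : Continuous f := hfp.continuous
    set g : Sd d → ℝ := fun z => f (sphereMap ρ z) with hg
    have hgp : IsPt d t g := isPt_comp_sphereMap hfp ρ
    have hgint : ∫ z, (g z)^2 ∂(sphMeasure d) = ∫ z, (f z)^2 ∂(sphMeasure d) :=
      integral_sphereMap ρ (fun z => (f z)^2) (hfc.pow 2)
    have hfint : ∫ z, (f z)^2 ∂(sphMeasure d) = K x := by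
      have h4 := int_expansion_mul Z hpt horth (fun p => Z p x) (fun p => Z p x)
      have h4' : ∫ z, (f z)^2 ∂(sphMeasure d)
          = ∫ z, (∑ p, Z p x * Z p z) * (∑ q, Z q x * Z q z) ∂(sphMeasure d) := by
        refine integral_congr_ae (Filter.Eventually.of_forall fun z => ?_)
        show (f z)^2 = _
        rw [sq]
      rw [h4', h4]
      exact Finset.sum_congr rfl fun p _ => (sq (Z p x)).symm
    have hgy : g y = K x := by
      show f (sphereMap ρ y) = K x
      rw [hρ]
      exact Finset.sum_congr rfl fun p _ => (sq (Z p x)).symm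
    have hb := hbound g hgp y
    rw [hgy, hgint, hfint] at hb
    rcases eq_or_lt_of_le (hKnn x) with h0 | hpos
    · rw [← h0]; exact hKnn y
    · rw [sq] at hb
      exact le_of_mul_le_mul_left hb hpos
  have hconst : ∀ x y : Sd d, K x = K y := fun x y => le_antisymm (hmono x y) (hmono y x)
  have hint : ∫ z, K z ∂(sphMeasure d) = (Fintype.card (HIdx d t) : ℝ) := by
    rw [hK]
    rw [integral_finset_sum _ (fun p _ => (show Continuous fun z => Z p z ^ 2 from ((hpt p).continuous).pow 2).sphIntegrable)]
    have h5 : ∀ p : HIdx d t, ∫ z, (Z p z)^2 ∂(sphMeasure d) = 1 := by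
      intro p
      have h6 := horth p p
      simp only [if_pos rfl] at h6
      simp_rw [← sq] at h6
      exact h6
    simp only [h5, Finset.sum_const, Finset.card_univ, nsmul_eq_mul, mul_one]
  have hcard : omega d * K x₀ = (Fintype.card (HIdx d t) : ℝ) := by
    have hKc : (fun z : Sd d => K z) = fun _ => K x₀ := funext fun z => hconst z x₀
    rw [hKc, integral_const, smul_eq_mul] at hint
    rw [omega]
    exact hint
  show K x₀ = _
  rw [eq_div_iff (omega_ne d)]
  linarith [hcard]

end Family

lemma Mdim_succ_succ (a m : ℕ) :
    Mdim (a + 1) (m + 1) = Nat.choose (m + a + 1) a + Nat.choose (m + a) a := by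
  unfold Mdim
  have h1 : 2 * (m + 1) + (a + 1) - 1 = (m + a + 1) + (m + 1) := by omega
  have h2 : (m + 1) + (a + 1) - 2 = m + a := by omega
  have h3 : (a + 1) - 1 = a := by omega
  rw [h1, h2, h3]
  have key : ((m + a + 1) + (m + 1)) * Nat.factorial (m + a)
      = (Nat.choose (m + a + 1) a + Nat.choose (m + a) a)
        * (Nat.factorial a * Nat.factorial (m + 1)) := by
    have e1 : Nat.choose (m + a + 1) a * Nat.factorial a * Nat.factorial (m + 1)
        = Nat.factorial (m + a + 1) := by
      have := Nat.choose_mul_factorial_mul_factorial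
        (show a ≤ m + a + 1 by omega)
      simpa [show m + a + 1 - a = m + 1 by omega] using this
    have e2 : Nat.choose (m + a) a * Nat.factorial a * Nat.factorial m
        = Nat.factorial (m + a) := by
      have := Nat.choose_mul_factorial_mul_factorial (show a ≤ m + a by omega)
      simpa [show m + a - a = m by omega] using this
    have e3 : Nat.factorial (m + a + 1) = (m + a + 1) * Nat.factorial (m + a) :=
      rfl
    have e4 : Nat.factorial (m + 1) = (m + 1) * Nat.factorial m := rfl
    calc ((m + a + 1) + (m + 1)) * Nat.factorial (m + a)
        = (m + a + 1) * Nat.factorial (m + a) + (m + 1) * Nat.factorial (m + a) := by ring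
      _ = Nat.choose (m + a + 1) a * Nat.factorial a * Nat.factorial (m + 1)
          + Nat.choose (m + a) a * Nat.factorial a * ((m + 1) * Nat.factorial m) := by
          rw [e1, ← e3, ← e2]; ring
      _ = _ := by rw [← e4]; ring
  rw [key, Nat.mul_div_cancel]
  positivity
lemma Mdim_d_zero (a : ℕ) : Mdim (a + 1) 0 ≤ 1 := by
  unfold Mdim
  rcases a with - | b
  · simp
  · have h1 : 2 * 0 + (b + 1 + 1) - 1 = b + 1 := by omega
    have h2 : 0 + (b + 1 + 1) - 2 = b := by omega
    have h3 : (b + 1 + 1) - 1 = b + 1 := by omega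
    rw [h1, h2, h3]
    have h4 : (b + 1) * Nat.factorial b = Nat.factorial (b + 1) * Nat.factorial 0 := by
      simp [Nat.factorial_succ, Nat.factorial]
    rw [h4, Nat.div_self (by positivity)]

lemma Mdim_d_zero' (b : ℕ) (hb : 1 ≤ b) : Mdim (b + 1) 0 = 1 := by
  unfold Mdim
  rcases b with - | b
  · omega
  · have h1 : 2 * 0 + (b + 1 + 1) - 1 = b + 1 := by omega
    have h2 : 0 + (b + 1 + 1) - 2 = b := by omega
    have h3 : (b + 1 + 1) - 1 = b + 1 := by omega
    rw [h1, h2, h3]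
    have h4 : (b + 1) * Nat.factorial b = Nat.factorial (b + 1) * Nat.factorial 0 := by
      simp [Nat.factorial_succ, Nat.factorial]
    rw [h4, Nat.div_self (by positivity)]

lemma Mdim_zero_ge3 (m : ℕ) : Mdim 0 (m + 3) = 0 := by
  unfold Mdim
  apply Nat.div_eq_of_lt
  have h1 : 2 * (m + 3) + 0 - 1 = 2 * m + 5 := by omega
  have h2 : (m + 3) + 0 - 2 = m + 1 := by omega
  have h3 : (0:ℕ) - 1 = 0 := by omega
  rw [h1, h2, h3]
  have h4 : Nat.factorial (m + 3) = (m + 3) * ((m + 2) * Nat.factorial (m + 1)) := by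
    simp [Nat.factorial_succ]
  rw [h4, Nat.factorial_zero, one_mul]
  have h5 : 2 * m + 5 < (m + 3) * (m + 2) := by nlinarith
  calc (2 * m + 5) * Nat.factorial (m + 1)
      < ((m + 3) * (m + 2)) * Nat.factorial (m + 1) :=
        (Nat.mul_lt_mul_right (Nat.factorial_pos _)).mpr h5
    _ = (m + 3) * ((m + 2) * Nat.factorial (m + 1)) := by ring

lemma sum_Mdim_le (d t : ℕ) : ∑ ℓ ∈ range (t + 1), Mdim d ℓ ≤ Mdim (d + 1) t := by
  rcases d with - | a
  · -- d = 0
    rcases t with - | - | t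
    · simp [Mdim]
    · simp [Finset.sum_range_succ, Mdim, Nat.factorial]
    · have hs : ∑ ℓ ∈ Finset.Ico 0 (t + 3), Mdim 0 ℓ
          = ∑ ℓ ∈ Finset.Ico 0 3, Mdim 0 ℓ + ∑ ℓ ∈ Finset.Ico 3 (t + 3), Mdim 0 ℓ :=
        (Finset.sum_Ico_consecutive _ (by omega) (by omega)).symm
      have hr : range (t + 2 + 1) = Finset.Ico 0 (t + 3) := by
        rw [Finset.range_eq_Ico]
      rw [hr, hs]
      have hz : ∑ ℓ ∈ Finset.Ico 3 (t + 3), Mdim 0 ℓ = 0 := by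
        apply Finset.sum_eq_zero
        intro ℓ hℓ
        rw [Finset.mem_Ico] at hℓ
        obtain ⟨m, rfl⟩ : ∃ m, ℓ = m + 3 := ⟨ℓ - 3, by omega⟩
        exact Mdim_zero_ge3 m
      have h3 : ∑ ℓ ∈ Finset.Ico 0 3, Mdim 0 ℓ = 2 := by
        rw [← Finset.range_eq_Ico]
        simp [Finset.sum_range_succ, Mdim, Nat.factorial]
      rw [hz, h3, Mdim_succ_succ 0 (t + 1)]
      simp
  · -- d = a + 1
    rcases t with - | n
    · rw [show a + 1 + 1 = (a + 1) + 1 from rfl, Mdim_d_zero' (a + 1) (by omega)]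
      simpa using Mdim_d_zero a
    · have hsplit : ∑ ℓ ∈ range (n + 1 + 1), Mdim (a + 1) ℓ
          = ∑ m ∈ range (n + 1), Mdim (a + 1) (m + 1) + Mdim (a + 1) 0 :=
        Finset.sum_range_succ' _ _
      have hterm : ∑ m ∈ range (n + 1), Mdim (a + 1) (m + 1)
          = ∑ m ∈ range (n + 1), Nat.choose (m + a + 1) a
            + ∑ m ∈ range (n + 1), Nat.choose (m + a) a := by
        rw [← Finset.sum_add_distrib]
        exact Finset.sum_congr rfl fun m _ => Mdim_succ_succ a m
      have hS1 : ∑ m ∈ range (n + 1), Nat.choose (m + a + 1) a + 1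
          = Nat.choose (n + 1 + a + 1) (a + 1) := by
        have h0 := Nat.sum_range_add_choose (n + 1) a
        rw [Finset.sum_range_succ'] at h0
        have h1 : ∑ m ∈ range (n + 1), Nat.choose (m + 1 + a) a
            = ∑ m ∈ range (n + 1), Nat.choose (m + a + 1) a :=
          Finset.sum_congr rfl fun m _ => by congr 1; omega
        rw [h1] at h0
        simp only [zero_add, Nat.choose_self] at h0
        rw [h0]
      have hS2 : ∑ m ∈ range (n + 1), Nat.choose (m + a) a
          = Nat.choose (n + a + 1) (a + 1) := Nat.sum_range_add_choose n a
      have hM : Mdim (a + 1 + 1) (n + 1)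
          = Nat.choose (n + (a + 1) + 1) (a + 1) + Nat.choose (n + (a + 1)) (a + 1) :=
        Mdim_succ_succ (a + 1) n
      have e1 : Nat.choose (n + (a + 1) + 1) (a + 1) = Nat.choose (n + 1 + a + 1) (a + 1) := by
        congr 1; omega
      have e2 : Nat.choose (n + (a + 1)) (a + 1) = Nat.choose (n + a + 1) (a + 1) := by
        congr 1
      have hz := Mdim_d_zero a
      rw [hsplit, hterm, hM, e1, e2]
      omega

lemma card_HIdx (d t : ℕ) :
    (Fintype.card (HIdx d t)) = ∑ ℓ ∈ range (t + 1), Mdim d ℓ := by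
  rw [Fintype.card_sigma]
  simp only [Fintype.card_fin]
  exact Fin.sum_univ_eq_sum_range _ _

lemma hidx_eq_iff {d t : ℕ} (p q : HIdx d t) :
    (p.1.1 = q.1.1 ∧ p.2.1 = q.2.1) ↔ p = q := by
  constructor
  · rintro ⟨h1, h2⟩
    obtain ⟨⟨l1, hl1⟩, k1⟩ := p
    obtain ⟨⟨l2, hl2⟩, k2⟩ := q
    simp only at h1 h2
    subst h1
    have : k1 = k2 := Fin.ext h2
    subst this
    rfl
  · rintro rfl; exact ⟨rfl, rfl⟩

lemma sum_hidx {d t : ℕ} (F : ℕ → ℕ → ℝ) :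
    ∑ p : HIdx d t, F p.1.1 p.2.1
      = ∑ ℓ ∈ range (t + 1), ∑ k ∈ range (Mdim d ℓ), F ℓ k := by
  rw [← Finset.univ_sigma_univ, Finset.sum_sigma]
  rw [← Fin.sum_univ_eq_sum_range (fun ℓ => ∑ k ∈ range (Mdim d ℓ), F ℓ k) (t + 1)]
  refine Finset.sum_congr rfl fun ℓ _ => ?_
  exact Fin.sum_univ_eq_sum_range (fun k => F ℓ.1 k) (Mdim d ℓ.1)

/-- `0 ≤ D_{N,t}(X) ≤ 4(N-1)M(d+1,t)²`, and `X` is a spherical `t`-design iff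
`D_{N,t}(X) = 0`. -/
theorem DNt_bounds_and_design_iff (d t N : ℕ)
    (hN : ∑ ℓ ∈ range (t + 1), Mdim d ℓ ≤ N)
    (X : Fin N → Sd d) (Y : ℕ → ℕ → Sd d → ℝ) (hY : IsONBHarmonics d t Y)
    (hfund : IsFundamental d t N X) :
    0 ≤ DNt d t N Y X ∧
      DNt d t N Y X ≤ 4 * ((N : ℝ) - 1) * (Mdim (d + 1) t : ℝ) ^ 2 ∧
      (IsDesign d t N X ↔ DNt d t N Y X = 0) := by
  classical
  set Z : HIdx d t → Sd d → ℝ := fun p => Y p.1.1 p.2.1 with hZdef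
  have hpt : ∀ p : HIdx d t, IsPt d t (Z p) := fun p =>
    isPt_mono (hY.poly p.1.1 (Nat.lt_succ_iff.mp p.1.2) p.2.1 p.2.2) (Nat.lt_succ_iff.mp p.1.2)
  have horth : ∀ p q : HIdx d t,
      ∫ x, Z p x * Z q x ∂(sphMeasure d) = if p = q then 1 else 0 := by
    intro p q
    have h := hY.ortho p.1.1 (Nat.lt_succ_iff.mp p.1.2) q.1.1 (Nat.lt_succ_iff.mp q.1.2)
      p.2.1 p.2.2 q.2.1 q.2.2
    rw [show (∫ x, Z p x * Z q x ∂(sphMeasure d))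
      = ∫ x, Y p.1.1 p.2.1 x * Y q.1.1 q.2.1 x ∂(sphMeasure d) from rfl, h]
    by_cases hpq : p = q
    · rw [if_pos ((hidx_eq_iff p q).mpr hpq), if_pos hpq]
    · rw [if_neg (fun hc => hpq ((hidx_eq_iff p q).mp hc)), if_neg hpq]
  have hspanZ : ∀ f : Sd d → ℝ, IsPt d t f →
      ∃ c : HIdx d t → ℝ, ∀ x, f x = ∑ p, c p * Z p x := by
    intro f hf
    obtain ⟨c, hc⟩ := hY.span f hf
    exact ⟨fun p => c p.1.1 p.2.1, fun x => by
      rw [hc x, ← sum_hidx (fun ℓ k => c ℓ k * Y ℓ k x)]⟩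
  have hNpos : 0 < N := by
    rcases Nat.eq_zero_or_pos N with h0 | h
    · exfalso
      have h1 := hfund (fun _ => (1:ℝ)) (isPt_const 1) (fun j => absurd j.2 (by omega))
      obtain ⟨x0⟩ := sphereNonempty d
      simpa using h1 x0
    · exact h
  have hNR : (0:ℝ) < (N:ℝ) := by exact_mod_cast hNpos
  obtain ⟨a, ha⟩ := hspanZ (fun _ => (1:ℝ)) (isPt_const 1)
  have ha' : ∀ x : Sd d, ∑ p, a p * Z p x = 1 := fun x => (ha x).symm
  have haa : ∑ p, a p * a p = omega d := by
    have h1 := int_expansion_mul Z hpt horth a a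
    have h2 : (fun x : Sd d => (∑ p, a p * Z p x) * (∑ q, a q * Z q x))
        = fun _ => (1:ℝ) := by
      funext x; rw [ha' x, one_mul]
    rw [h2] at h1
    rw [← h1, integral_const, smul_eq_mul, mul_one]
    rfl
  have hIntZ : ∀ p, ∫ x, Z p x ∂(sphMeasure d) = a p := by
    intro p
    have h1 := int_expansion_coeff Z hpt horth a p
    have h2 : (fun x : Sd d => (∑ q, a q * Z q x) * Z p x) = fun x => Z p x := by
      funext x; rw [ha' x, one_mul]
    rw [h2] at h1
    exact h1
  set r : HIdx d t → ℝ := fun p => ∑ j, Z p (X j) with hrdef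
  have hswap : ∀ (c : HIdx d t → ℝ),
      ∑ j, (∑ p, c p * Z p (X j)) = ∑ p, c p * r p := by
    intro c
    rw [Finset.sum_comm]
    exact Finset.sum_congr rfl fun p _ => by rw [← Finset.mul_sum]
  have hNr : ∑ p, a p * r p = (N:ℝ) := by
    rw [← hswap a, Finset.sum_congr rfl fun (j : Fin N) _ => ha' (X j)]
    simp
  set g : Fin N → ℝ := fun j => (Gmat d t N Y X).mulVec (fun _ => 1) j with hgdef
  have hGm : ∀ j, g j = ∑ m, ∑ p, Z p (X j) * Z p (X m) := by
    intro j
    show (Gmat d t N Y X).mulVec (fun _ => 1) j = _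
    simp only [Matrix.mulVec, dotProduct, mul_one]
    refine Finset.sum_congr rfl fun m _ => ?_
    rw [Gmat, Matrix.mul_apply]
    rfl
  have hGe : ∀ j, g j = ∑ p, Z p (X j) * r p := by
    intro j
    rw [hGm j, Finset.sum_comm]
    exact Finset.sum_congr rfl fun p _ => by rw [← Finset.mul_sum]
  have hCvec : ∀ i : Fin (N - 1), Cvec d t N Y X i
      = g ⟨0, by have := i.2; omega⟩ - g ⟨i.1 + 1, by have := i.2; omega⟩ := fun i => rfl
  -- characterization of designs via coefficients
  have hDes : IsDesign d t N X ↔ ∀ p, omega d * r p = (N:ℝ) * a p := by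
    constructor
    · intro hD p
      have h1 := hD (Z p) (hpt p)
      rw [hIntZ p] at h1
      have h2 : r p / (N:ℝ) = a p / omega d := h1
      rw [div_eq_div_iff hNR.ne' (omega_pos d).ne'] at h2
      linarith [h2]
    · intro h f hf
      obtain ⟨c, hc⟩ := hspanZ f hf
      have h1 : ∑ j, f (X j) = ∑ p, c p * r p := by
        rw [Finset.sum_congr rfl fun (j : Fin N) _ => hc (X j), hswap c]
      have h2 : ∫ x, f x ∂(sphMeasure d) = ∑ p, c p * a p := by
        rw [show (fun x : Sd d => f x) = fun x => ∑ p, c p * Z p x from funext hc]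
        rw [integral_finset_sum _
          (fun p _ => (show Continuous fun x => c p * Z p x from continuous_const.mul (hpt p).continuous).sphIntegrable)]
        exact Finset.sum_congr rfl fun p _ => by
          rw [MeasureTheory.integral_const_mul, hIntZ p]
      rw [h1, h2, div_eq_div_iff hNR.ne' (omega_pos d).ne']
      calc (∑ p, c p * r p) * omega d = ∑ p, c p * (omega d * r p) := by
            rw [Finset.sum_mul]
            exact Finset.sum_congr rfl fun p _ => by ring
        _ = ∑ p, c p * ((N:ℝ) * a p) := Finset.sum_congr rfl fun p _ => by rw [h p]
        _ = (∑ p, c p * a p) * (N:ℝ) := by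
            rw [Finset.sum_mul]
            exact Finset.sum_congr rfl fun p _ => by ring
  have hfac : (0:ℝ) < omega d ^ 2 / (N:ℝ) ^ 2 := by
    have := omega_pos d
    positivity
  have hDNt0 : DNt d t N Y X = 0 ↔ ∀ i, Cvec d t N Y X i = 0 := by
    unfold DNt
    rw [mul_eq_zero]
    constructor
    · rintro (h | h) i
      · exact absurd h hfac.ne'
      · have h1 := (Finset.sum_eq_zero_iff_of_nonneg
          (fun i _ => sq_nonneg (Cvec d t N Y X i))).mp h i (Finset.mem_univ i)
        exact pow_eq_zero_iff two_ne_zero |>.mp h1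
    · intro h
      right
      exact Finset.sum_eq_zero fun i _ => by rw [h i]; exact zero_pow two_ne_zero
  refine ⟨by unfold DNt; positivity, ?_, ?_⟩
  · -- upper bound
    have hker := kernel_eq Z hpt horth hspanZ
    set n : ℝ := (Fintype.card (HIdx d t) : ℝ) with hndef
    have hn0 : 0 ≤ n / omega d := by
      have := omega_pos d
      positivity
    have hK : ∀ x y : Sd d, |∑ p, Z p x * Z p y| ≤ n / omega d := by
      intro x y
      have h1 : (∑ p, Z p x * Z p y)^2 ≤ (∑ p, (Z p x)^2) * (∑ p, (Z p y)^2) :=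
        Finset.sum_mul_sq_le_sq_mul_sq _ _ _
      rw [hker x, hker y] at h1
      calc |∑ p, Z p x * Z p y| = Real.sqrt ((∑ p, Z p x * Z p y)^2) :=
            (Real.sqrt_sq_eq_abs _).symm
        _ ≤ Real.sqrt ((n / omega d) * (n / omega d)) := Real.sqrt_le_sqrt h1
        _ = n / omega d := Real.sqrt_mul_self hn0
    have hgb : ∀ j, |g j| ≤ (N:ℝ) * (n / omega d) := by
      intro j
      rw [hGm j]
      calc |∑ m, ∑ p, Z p (X j) * Z p (X m)|
          ≤ ∑ m, |∑ p, Z p (X j) * Z p (X m)| := Finset.abs_sum_le_sum_abs _ _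
        _ ≤ ∑ _m : Fin N, n / omega d := Finset.sum_le_sum fun m _ => hK _ _
        _ = (N:ℝ) * (n / omega d) := by
            rw [Finset.sum_const, Finset.card_univ, Fintype.card_fin, nsmul_eq_mul]
    have hCb : ∀ i : Fin (N - 1), (Cvec d t N Y X i)^2
        ≤ (2 * (N:ℝ) * (n / omega d))^2 := by
      intro i
      rw [hCvec i]
      have h1 : |g ⟨0, by have := i.2; omega⟩ - g ⟨i.1 + 1, by have := i.2; omega⟩|
          ≤ 2 * (N:ℝ) * (n / omega d) := by
        calc |g ⟨0, by have := i.2; omega⟩ - g ⟨i.1 + 1, by have := i.2; omega⟩|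
            ≤ |g ⟨0, by have := i.2; omega⟩| + |g ⟨i.1 + 1, by have := i.2; omega⟩| :=
              abs_sub _ _
          _ ≤ (N:ℝ) * (n / omega d) + (N:ℝ) * (n / omega d) :=
              add_le_add (hgb _) (hgb _)
          _ = 2 * (N:ℝ) * (n / omega d) := by ring
      have h2 := abs_le.mp h1
      exact sq_le_sq' (by linarith [h2.1]) h2.2
    have hsum : ∑ i, (Cvec d t N Y X i)^2
        ≤ ((N:ℝ) - 1) * (2 * (N:ℝ) * (n / omega d))^2 := by
      calc ∑ i, (Cvec d t N Y X i)^2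
          ≤ ∑ _i : Fin (N - 1), (2 * (N:ℝ) * (n / omega d))^2 :=
            Finset.sum_le_sum fun i _ => hCb i
        _ = ((N - 1 : ℕ):ℝ) * (2 * (N:ℝ) * (n / omega d))^2 := by
            rw [Finset.sum_const, Finset.card_univ, Fintype.card_fin, nsmul_eq_mul]
        _ = ((N:ℝ) - 1) * (2 * (N:ℝ) * (n / omega d))^2 := by
            rw [Nat.cast_sub hNpos, Nat.cast_one]
    have hMn : n ≤ (Mdim (d + 1) t : ℝ) := by
      rw [hndef]
      exact_mod_cast (card_HIdx d t ▸ sum_Mdim_le d t :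
        Fintype.card (HIdx d t) ≤ Mdim (d + 1) t)
    have hn_nonneg : (0:ℝ) ≤ n := by rw [hndef]; positivity
    have hEq : omega d ^ 2 / (N:ℝ) ^ 2 * (((N:ℝ) - 1) * (2 * (N:ℝ) * (n / omega d))^2)
        = 4 * ((N:ℝ) - 1) * n^2 := by
      have hw : omega d ≠ 0 := (omega_pos d).ne'
      have hnn : (N:ℝ) ≠ 0 := hNR.ne'
      field_simp
      ring
    calc DNt d t N Y X ≤ omega d ^ 2 / (N:ℝ) ^ 2
          * (((N:ℝ) - 1) * (2 * (N:ℝ) * (n / omega d))^2) := by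
          unfold DNt
          exact mul_le_mul_of_nonneg_left hsum hfac.le
      _ = 4 * ((N:ℝ) - 1) * n^2 := hEq
      _ ≤ 4 * ((N:ℝ) - 1) * (Mdim (d + 1) t : ℝ)^2 := by
          have hN1 : (0:ℝ) ≤ (N:ℝ) - 1 := by
            have : (1:ℝ) ≤ (N:ℝ) := by exact_mod_cast hNpos
            linarith
          have := pow_le_pow_left₀ hn_nonneg hMn 2
          nlinarith
  · -- design iff
    rw [hDNt0]
    constructor
    · intro hD i
      have hcoef := hDes.mp hD
      have hgj : ∀ j, g j = (N:ℝ) / omega d := by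
        intro j
        rw [hGe j]
        have h3 : ∀ p, Z p (X j) * r p
            = ((N:ℝ) / omega d) * (a p * Z p (X j)) := by
          intro p
          have h4 := hcoef p
          have h5 : r p = (N:ℝ) * a p / omega d := by
            rw [eq_div_iff (omega_pos d).ne']
            linarith [h4]
          rw [h5]
          ring
        rw [Finset.sum_congr rfl fun p _ => h3 p, ← Finset.mul_sum, ha' (X j), mul_one]
      rw [hCvec i, hgj, hgj, sub_self]
    · intro h0
      apply hDes.mpr
      set cst : ℝ := g ⟨0, hNpos⟩ with hcstdef
      have hgj : ∀ j, g j = cst := by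
        intro j
        rcases j with ⟨jv, hj⟩
        rcases jv with - | i
        · rfl
        · have hi : i < N - 1 := by omega
          have h1 := h0 ⟨i, hi⟩
          rw [hCvec ⟨i, hi⟩] at h1
          have h2 : g ⟨i + 1, hj⟩ = g ⟨0, hNpos⟩ := by
            have e1 : (⟨i + 1, hj⟩ : Fin N) = ⟨(⟨i, hi⟩ : Fin (N-1)).1 + 1, by omega⟩ :=
              Fin.ext rfl
            have e2 : (⟨0, hNpos⟩ : Fin N) = ⟨0, by omega⟩ := Fin.ext rfl
            rw [e1, e2]
            linarith [h1]
          exact h2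
      set h : Sd d → ℝ := fun x => ∑ p, (r p - cst * a p) * Z p x with hhdef
      have hhp : IsPt d t h := isPt_sum _ _ fun p _ => isPt_smul _ (hpt p)
      have hhX : ∀ j, h (X j) = 0 := by
        intro j
        show ∑ p, (r p - cst * a p) * Z p (X j) = 0
        have e : ∀ p : HIdx d t, (r p - cst * a p) * Z p (X j)
            = Z p (X j) * r p - cst * (a p * Z p (X j)) := fun p => by ring
        rw [Finset.sum_congr rfl fun p _ => e p, Finset.sum_sub_distrib, ← Finset.mul_sum,
          ha' (X j), ← hGe j, hgj j]
        ring
      have hzero := hfund h hhp hhX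
      have hcoefh : ∀ q, r q - cst * a q = 0 := by
        intro q
        have h1 := int_expansion_coeff Z hpt horth (fun p => r p - cst * a p) q
        have h2 : (fun x : Sd d => (∑ p, (r p - cst * a p) * Z p x) * Z q x)
            = fun _ => (0:ℝ) := by
          funext x
          rw [show ∑ p, (r p - cst * a p) * Z p x = h x from rfl, hzero x, zero_mul]
        rw [h2, integral_zero] at h1
        exact h1.symm
      have hcw : cst * omega d = (N:ℝ) := by
        have h1 : ∑ p, a p * r p = cst * ∑ p, a p * a p := by
          rw [Finset.mul_sum]
          refine Finset.sum_congr rfl fun p _ => ?_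
          have hrp : r p = cst * a p := by linarith [hcoefh p]
          rw [hrp]; ring
        rw [haa, hNr] at h1
        linarith [h1]
      intro p
      have hrp : r p = cst * a p := by linarith [hcoefh p]
      rw [hrp]
      calc omega d * (cst * a p) = (cst * omega d) * a p := by ring
        _ = (N:ℝ) * a p := by rw [hcw]
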